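/- Let α > 0 and suppose there exists y₁ ∈ (0, R_α) with v(α, y₁) = 1 and v(α, r) < 1 for all r ∈ (0, y₁). Then ∂_r v(α, r) > 0 for all r ∈ [y₁, R_α). -/

import Mathlib

open Filter Set Topology

/-- The degree-`n` vortex equation at a point `r`:
`(1/2)·u'' + (1/2)·coth(r)·u' − (n²/(2·sinh²(r)))·u + u − u³ = 0`. -/
def VortexEqAt (n : ℝ) (u : ℝ → ℝ) (r : ℝ) : Prop :=
  (1/2) * deriv (deriv u) r + (1/2) * (Real.cosh r / Real.sinh r) * deriv u r
    - n ^ 2 / (2 * Real.sinh r ^ 2) * u r + u r - u r ^ 3 = 0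

/-- `u` is a (C²) solution of the degree-`n` vortex equation on the set `s`. -/
def IsVortexSolOn (n : ℝ) (u : ℝ → ℝ) (s : Set ℝ) : Prop :=
  ContDiffOn ℝ 2 u s ∧ ∀ r ∈ s, VortexEqAt n u r

/-- The interval `(0, R)` for an extended-real right endpoint `R`. -/
def MaxDom (R : EReal) : Set ℝ := {r : ℝ | 0 < r ∧ (r : EReal) < R}

/-- `u` is the maximal solution of the degree-`n` vortex equation on `(0, R)` with
`u(r)/rⁿ → α` as `r → 0⁺`: it solves the equation, has the prescribed behaviour at the
origin, every solution with the same behaviour at the origin is defined at most up to `R`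
and agrees with `u`, and either `R = ∞` or `u` blows up at `R⁻`. -/
def IsMaximalVortexSol (n α : ℝ) (u : ℝ → ℝ) (R : EReal) : Prop :=
  0 < R ∧
  IsVortexSolOn n u (MaxDom R) ∧
  Tendsto (fun r => u r / r ^ n) (nhdsWithin 0 (Set.Ioi 0)) (nhds α) ∧
  (∀ b : ℝ, 0 < b → ∀ w : ℝ → ℝ, IsVortexSolOn n w (Set.Ioo 0 b) →
    Tendsto (fun r => w r / r ^ n) (nhdsWithin 0 (Set.Ioi 0)) (nhds α) →
    (b : EReal) ≤ R ∧ Set.EqOn w u (Set.Ioo 0 b)) ∧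
  (R = ⊤ ∨ ∃ Rr : ℝ, R = (Rr : EReal) ∧
    Tendsto u (nhdsWithin Rr (Set.Iio Rr)) atTop)

/-- If `f` is differentiable at `z` with positive derivative, then just to the left of `z`
the values of `f` are smaller than `f z`. -/
lemma eventually_left_lt_of_deriv_pos {f : ℝ → ℝ} {z : ℝ}
    (hf : DifferentiableAt ℝ f z) (hd : 0 < deriv f z) :
    ∀ᶠ y in 𝓝[<] z, f y < f z := by
  have h := hasDerivAt_iff_tendsto_slope.mp hf.hasDerivAt
  have h2 : ∀ᶠ y in 𝓝[≠] z, 0 < slope f z y := h.eventually (eventually_gt_nhds hd)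
  have hmono : 𝓝[<] z ≤ 𝓝[≠] z := nhdsWithin_mono _ fun y hy => ne_of_lt hy
  filter_upwards [h2.filter_mono hmono, self_mem_nhdsWithin] with y hy hy'
  rw [slope_def_field] at hy
  rcases div_pos_iff.mp hy with ⟨h1, h2⟩ | ⟨h1, h2⟩
  · have : y - z < 0 := sub_neg.mpr hy'
    linarith
  · linarith

/-- If `f` is differentiable at `z` with negative derivative, then just to the left of `z`
the values of `f` are larger than `f z`. -/
lemma eventually_left_gt_of_deriv_neg {f : ℝ → ℝ} {z : ℝ}
    (hf : DifferentiableAt ℝ f z) (hd : deriv f z < 0) :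
    ∀ᶠ y in 𝓝[<] z, f z < f y := by
  have h := hasDerivAt_iff_tendsto_slope.mp hf.hasDerivAt
  have h2 : ∀ᶠ y in 𝓝[≠] z, slope f z y < 0 := h.eventually (eventually_lt_nhds hd)
  have hmono : 𝓝[<] z ≤ 𝓝[≠] z := nhdsWithin_mono _ fun y hy => ne_of_lt hy
  filter_upwards [h2.filter_mono hmono, self_mem_nhdsWithin] with y hy hy'
  rw [slope_def_field] at hy
  rcases div_neg_iff.mp hy with ⟨h1, h2⟩ | ⟨h1, h2⟩
  · linarith
  · have : y - z < 0 := sub_neg.mpr hy'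
    linarith

/-- **Once the shooting solution reaches the value `1`, it keeps increasing.** -/
theorem increasing_after_one (n : ℝ) (hn : 0 < n)
    (v : ℝ → ℝ → ℝ) (R : ℝ → EReal)
    (hfam : ∀ α : ℝ, 0 ≤ α → IsMaximalVortexSol n α (v α) (R α))
    (α : ℝ) (hα : 0 < α)
    (y₁ : ℝ) (hy₁ : y₁ ∈ MaxDom (R α))
    (hv1 : v α y₁ = 1)
    (hlt : ∀ r ∈ Set.Ioo (0 : ℝ) y₁, v α r < 1) :
    ∀ r : ℝ, y₁ ≤ r → (r : EReal) < R α → 0 < deriv (v α) r := by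
  obtain ⟨hRpos, ⟨hC2, hODE⟩, -, -, -⟩ := hfam α hα.le
  set u : ℝ → ℝ := v α with hu
  set s : Set ℝ := MaxDom (R α) with hs
  -- the domain is open
  have hsopen : IsOpen s := by
    have hseq : s = Real.toEReal ⁻¹' (Set.Ioi 0 ∩ Set.Iio (R α)) := by
      ext r
      simp [hs, MaxDom, Set.mem_preimage, EReal.coe_pos, Set.mem_Ioi, Set.mem_Iio]
    rw [hseq]
    exact (isOpen_Ioi.inter isOpen_Iio).preimage continuous_coe_real_ereal
  have hy₁s : y₁ ∈ s := hy₁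
  have hy₁pos : 0 < y₁ := hy₁.1
  -- differentiability facts
  have hdiff : ∀ x ∈ s, DifferentiableAt ℝ u x := fun x hx =>
    (hC2.contDiffAt (hsopen.mem_nhds hx)).differentiableAt (by norm_num)
  have hC1' : ContDiffOn ℝ 1 (deriv u) s := hC2.deriv_of_isOpen hsopen (by norm_num)
  have hdiff' : ∀ x ∈ s, DifferentiableAt ℝ (deriv u) x := fun x hx =>
    (hC1'.contDiffAt (hsopen.mem_nhds hx)).differentiableAt (by norm_num)
  have hcont' : ∀ x ∈ s, ContinuousAt (deriv u) x := fun x hx =>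
    (hdiff' x hx).continuousAt
  have hcontOn : ContinuousOn u s := hC2.continuousOn
  have hcontOn' : ContinuousOn (deriv u) s := hC1'.continuousOn
  -- key second-derivative computation at critical points with value ≥ 1
  have key : ∀ z ∈ s, deriv u z = 0 → 1 ≤ u z → 0 < deriv (deriv u) z := by
    intro z hz hdz huz
    have hode := hODE z hz
    unfold VortexEqAt at hode
    rw [hdz] at hode
    have hsinh : 0 < Real.sinh z := Real.sinh_pos_iff.mpr hz.1
    have hA : 0 < n ^ 2 / (2 * Real.sinh z ^ 2) :=
      div_pos (pow_pos hn 2) (by positivity)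
    have hAu : 0 < n ^ 2 / (2 * Real.sinh z ^ 2) * u z :=
      mul_pos hA (lt_of_lt_of_le one_pos huz)
    nlinarith [hode, hAu, huz, sq_nonneg (u z - 1), sq_nonneg (u z + 1)]
  -- Step 1: the derivative at y₁ is positive
  have hstep1 : 0 < deriv u y₁ := by
    rcases lt_trichotomy (deriv u y₁) 0 with hneg | hzero | hpos
    · -- negative derivative: u > 1 just to the left, contradiction
      have hev := eventually_left_gt_of_deriv_neg (hdiff y₁ hy₁s) hneg
      have hIoo : Set.Ioo 0 y₁ ∈ 𝓝[<] y₁ :=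
        Ioo_mem_nhdsLT_of_mem ⟨hy₁pos, le_refl y₁⟩
      obtain ⟨y, hy1, hy2⟩ := (hev.and hIoo).exists
      have h3 := hlt y hy2
      rw [hv1] at hy1
      linarith
    · -- zero derivative: second derivative positive, so deriv u < 0 just left
      exfalso
      have hD2 : 0 < deriv (deriv u) y₁ := key y₁ hy₁s hzero (le_of_eq hv1.symm)
      have hev := eventually_left_lt_of_deriv_pos (hdiff' y₁ hy₁s) hD2
      rw [hzero] at hev
      have hIoo : Set.Ioo 0 y₁ ∈ 𝓝[<] y₁ :=
        Ioo_mem_nhdsLT_of_mem ⟨hy₁pos, le_refl y₁⟩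
      obtain ⟨c, hc, hsub⟩ := mem_nhdsLT_iff_exists_Ioo_subset.mp (hev.and hIoo)
      set c' : ℝ := max c 0 with hc'
      have hc'lt : c' < y₁ := max_lt hc hy₁pos
      set m : ℝ := (c' + y₁) / 2 with hm
      have hmlt : m < y₁ := by rw [hm]; linarith
      have hmgt : c' < m := by rw [hm]; linarith
      have hmpos : 0 < m := lt_of_le_of_lt (le_max_right c 0) hmgt
      have hIccs : Set.Icc m y₁ ⊆ s := by
        intro t ht
        refine ⟨lt_of_lt_of_le hmpos ht.1, ?_⟩
        exact lt_of_le_of_lt (EReal.coe_le_coe_iff.mpr ht.2) hy₁.2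
      have hanti : StrictAntiOn u (Set.Icc m y₁) := by
        apply strictAntiOn_of_deriv_neg (convex_Icc m y₁) (hcontOn.mono hIccs)
        intro x hx
        rw [interior_Icc] at hx
        have hxmem : x ∈ Set.Ioo c y₁ := ⟨lt_of_le_of_lt (le_max_left c 0)
          (lt_trans hmgt hx.1), hx.2⟩
        exact (hsub hxmem).1
      have h1 : u y₁ < u m := hanti (Set.left_mem_Icc.mpr hmlt.le)
        (Set.right_mem_Icc.mpr hmlt.le) hmlt
      have h2 : u m < 1 := hlt m ⟨hmpos, hmlt⟩
      rw [hv1] at h1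
      linarith
    · exact hpos
  -- Main argument
  intro r hr hrR
  by_contra hle
  push_neg at hle
  rcases eq_or_lt_of_le hr with heq | hlt'
  · rw [heq] at hstep1; linarith
  · -- r > y₁ : take the first point z in [y₁, r] where deriv u ≤ 0
    have hIccs : Set.Icc y₁ r ⊆ s := by
      intro t ht
      refine ⟨lt_of_lt_of_le hy₁pos ht.1, ?_⟩
      exact lt_of_le_of_lt (EReal.coe_le_coe_iff.mpr ht.2) hrR
    set S : Set ℝ := Set.Icc y₁ r ∩ (deriv u) ⁻¹' (Set.Iic 0) with hS
    have hSclosed : IsClosed S :=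
      (hcontOn'.mono hIccs).preimage_isClosed_of_isClosed isClosed_Icc isClosed_Iic
    have hScompact : IsCompact S :=
      isCompact_Icc.of_isClosed_subset hSclosed Set.inter_subset_left
    have hSne : S.Nonempty := ⟨r, ⟨hr, le_refl r⟩, hle⟩
    set z : ℝ := sInf S with hz
    have hzS : z ∈ S := hScompact.sInf_mem hSne
    have hzIcc : z ∈ Set.Icc y₁ r := hzS.1
    have hzle : deriv u z ≤ 0 := hzS.2
    have hzs : z ∈ s := hIccs hzIcc
    have hzy₁ : y₁ < z := by
      rcases eq_or_lt_of_le hzIcc.1 with h | h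
      · exfalso; rw [h] at hstep1; linarith
      · exact h
    -- deriv u > 0 on [y₁, z)
    have hpos : ∀ t ∈ Set.Ico y₁ z, 0 < deriv u t := by
      intro t ht
      by_contra htle
      push_neg at htle
      have : t ∈ S := ⟨⟨ht.1, le_trans ht.2.le hzIcc.2⟩, htle⟩
      have h4 := csInf_le hScompact.bddBelow this
      rw [← hz] at h4
      linarith [ht.2, h4]
    -- deriv u z = 0 by left continuity
    have hz0 : deriv u z = 0 := by
      refine le_antisymm hzle ?_
      have hcz : Tendsto (deriv u) (𝓝[<] z) (𝓝 (deriv u z)) :=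
        ((hcont' z hzs).tendsto).mono_left nhdsWithin_le_nhds
      have hIoo : Set.Ioo y₁ z ∈ 𝓝[<] z :=
        Ioo_mem_nhdsLT_of_mem ⟨hzy₁, le_refl z⟩
      refine ge_of_tendsto hcz ?_
      filter_upwards [hIoo] with t ht
      exact (hpos t ⟨ht.1.le, ht.2⟩).le
    -- u z > 1 by strict monotonicity on [y₁, z]
    have huz : 1 < u z := by
      have hmono : StrictMonoOn u (Set.Icc y₁ z) := by
        apply strictMonoOn_of_deriv_pos (convex_Icc y₁ z)
          (hcontOn.mono (fun t ht => hIccs ⟨ht.1, le_trans ht.2 hzIcc.2⟩))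
        intro x hx
        rw [interior_Icc] at hx
        exact hpos x ⟨hx.1.le, hx.2⟩
      have := hmono (Set.left_mem_Icc.mpr hzy₁.le) (Set.right_mem_Icc.mpr hzy₁.le) hzy₁
      rw [hv1] at this
      exact this
    -- second derivative positive at z, so deriv u < 0 just left of z: contradiction
    have hD2 : 0 < deriv (deriv u) z := key z hzs hz0 huz.le
    have hev := eventually_left_lt_of_deriv_pos (hdiff' z hzs) hD2
    rw [hz0] at hev
    have hIoo : Set.Ioo y₁ z ∈ 𝓝[<] z :=
      Ioo_mem_nhdsLT_of_mem ⟨hzy₁, le_refl z⟩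
    obtain ⟨y, hy1, hy2⟩ := (hev.and hIoo).exists
    have := hpos y ⟨hy2.1.le, hy2.2⟩
    linarith
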